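/- Binet formula for Horadam quaternions: for every natural number n, Gₙ = (A·α̲·αⁿ − B·β̲·βⁿ)/(α − β), where the products A·α̲ and B·β̲ are scalar multiplications of the real quaternions α̲ and β̲. -/

import Mathlib

open Quaternion

/-- The Horadam sequence `w(a,b;p,q)`: `w₀ = a`, `w₁ = b`,
`wₙ = p·wₙ₋₁ + q·wₙ₋₂` for `n ≥ 2`. -/
def horadam (a b p q : ℝ) : ℕ → ℝ
  | 0 => a
  | 1 => b
  | n + 2 => p * horadam a b p q (n + 1) + q * horadam a b p q n

/-- The `n`-th Horadam quaternion `Gₙ = wₙ + wₙ₊₁·i + wₙ₊₂·j + wₙ₊₃·k`. -/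
def horadamQ (a b p q : ℝ) (n : ℕ) : ℍ[ℝ] :=
  ⟨horadam a b p q n, horadam a b p q (n + 1), horadam a b p q (n + 2), horadam a b p q (n + 3)⟩

/-- Binet formula for Horadam quaternions:
`Gₙ = (A·α̲·αⁿ − B·β̲·βⁿ)/(α − β)`. -/
theorem horadamQ_binet (a b p q : ℝ) (hpq : p ^ 2 + 4 * q > 0)
    (α β A B : ℝ)
    (hα : α = (p + Real.sqrt (p ^ 2 + 4 * q)) / 2)
    (hβ : β = (p - Real.sqrt (p ^ 2 + 4 * q)) / 2)
    (hA : A = b - a * β) (hB : B = b - a * α)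
    (αq βq : ℍ[ℝ])
    (hαq : αq = ⟨1, α, α ^ 2, α ^ 3⟩) (hβq : βq = ⟨1, β, β ^ 2, β ^ 3⟩) :
    ∀ n : ℕ, horadamQ a b p q n =
      ((A * α ^ n) • αq - (B * β ^ n) • βq) / ((α - β : ℝ) : ℍ[ℝ]) := by
  -- square root facts
  have hs : Real.sqrt (p ^ 2 + 4 * q) ^ 2 = p ^ 2 + 4 * q :=
    Real.sq_sqrt hpq.le
  have hspos : 0 < Real.sqrt (p ^ 2 + 4 * q) := Real.sqrt_pos.mpr hpq
  have hαβ : α - β = Real.sqrt (p ^ 2 + 4 * q) := by rw [hα, hβ]; ring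
  have hne : α - β ≠ 0 := by rw [hαβ]; exact hspos.ne'
  have hα2 : α ^ 2 = p * α + q := by rw [hα]; nlinarith [hs]
  have hβ2 : β ^ 2 = p * β + q := by rw [hβ]; nlinarith [hs]
  -- scalar Binet, multiplied form
  have key : ∀ n : ℕ, horadam a b p q n * (α - β) = A * α ^ n - B * β ^ n := by
    have H : ∀ n : ℕ, horadam a b p q n * (α - β) = A * α ^ n - B * β ^ n ∧
        horadam a b p q (n + 1) * (α - β) = A * α ^ (n + 1) - B * β ^ (n + 1) := by
      intro n
      induction n with
      | zero =>
        constructor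
        · simp [horadam, hA, hB]; ring
        · simp [horadam, hA, hB]; ring
      | succ k ih =>
        refine ⟨ih.2, ?_⟩
        have : horadam a b p q (k + 2) = p * horadam a b p q (k + 1) + q * horadam a b p q k := rfl
        rw [this]
        have e1 := ih.1
        have e2 := ih.2
        have : (p * horadam a b p q (k + 1) + q * horadam a b p q k) * (α - β)
            = p * (A * α ^ (k + 1) - B * β ^ (k + 1)) + q * (A * α ^ k - B * β ^ k) := by
          rw [← e1, ← e2]; ring
        rw [this]
        have hαk : α ^ (k + 2) = (p * α + q) * α ^ k := by rw [← hα2]; ring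
        have hβk : β ^ (k + 2) = (p * β + q) * β ^ k := by rw [← hβ2]; ring
        rw [hαk, hβk]; ring
    exact fun n => (H n).1
  intro n
  rw [eq_div_iff (by simpa using Quaternion.coe_injective.ne hne)]
  rw [Quaternion.mul_coe_eq_smul]
  ext <;>
    simp [Quaternion.mul_coe_eq_smul, smul_eq_mul] <;> simp [horadamQ, hαq, hβq, mul_comm (α - β)] <;> (rw [key]; try ring)
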